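/- Let S be a numerical semigroup of depth q ≥ 4 with minimal generating set P, left part L = S ∩ [0,c), offset ρ = qm−c, and D_q = D ∩ [c,c+m) with α''_q = |(S\(m+S)) ∩ D ∩ [c,c+m)|. If |P ∩ L| ≥ max(α''_q, q), then W_0(S) = |P ∩ L|·|L| − q|D_q| + ρ ≥ ρ, and in particular W_0(S) ≥ 0. -/
import Mathlib

theorem stmt18 (S : Set ℕ)
    (h0 : 0 ∈ S)
    (hadd : ∀ a ∈ S, ∀ b ∈ S, a + b ∈ S)
    (hfin : (Sᶜ : Set ℕ).Finite)
    (m : ℕ) (hm : m ∈ S ∧ m ≠ 0 ∧ ∀ x ∈ S, x ≠ 0 → m ≤ x)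
    (c : ℕ) (hc : (∀ x, c ≤ x → x ∈ S) ∧ ∀ c', (∀ x, c' ≤ x → x ∈ S) → c ≤ c')
    (q ρ : ℕ) (hq : q = (c + m - 1) / m) (hρ : ρ = q * m - c)
    (P : Set ℕ)
    (hP : P = {x ∈ S | x ≠ 0 ∧ ¬ ∃ a ∈ S, ∃ b ∈ S, a ≠ 0 ∧ b ≠ 0 ∧ a + b = x})
    (D : Set ℕ)
    (hD : D = {x ∈ S | ∃ a ∈ S, ∃ b ∈ S, a ≠ 0 ∧ b ≠ 0 ∧ a + b = x})
    (L : Set ℕ) (hL : L = {x ∈ S | x < c})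
    (A : Set ℕ) (hA : A = {x ∈ S | ¬ ∃ s ∈ S, x = m + s})
    (Dq : Set ℕ) (hDq : Dq = {x ∈ D | c ≤ x ∧ x < c + m})
    (αq'' : ℕ) (hαq'' : αq'' = (A ∩ D ∩ {x | c ≤ x ∧ x < c + m}).ncard)
    (hq4 : 4 ≤ q)
    (hbig : max αq'' q ≤ (P ∩ L).ncard) :
    (ρ : ℤ) ≤ (P ∩ L).ncard * L.ncard - q * Dq.ncard + ρ ∧
    (0 : ℤ) ≤ (P ∩ L).ncard * L.ncard - q * Dq.ncard + ρ := by
  have hm0 : 1 ≤ m := Nat.one_le_iff_ne_zero.mpr hm.2.1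
  -- basic bounds on c versus q*m
  have e3 : 4 * m ≤ q * m := Nat.mul_le_mul_right m hq4
  have e4 : m * q = q * m := Nat.mul_comm m q
  have e1 : m * q + (c + m - 1) % m = c + m - 1 := by
    rw [hq]; exact Nat.div_add_mod _ _
  have e2 : (c + m - 1) % m < m := Nat.mod_lt _ (by omega)
  have h3m : 3 * m < c := by omega
  have hcqm : c ≤ q * m := by omega
  -- the interval condition
  have hI : ∀ x, c ≤ x → x ∈ S := hc.1
  have hge : ∀ x ∈ S, x ≠ 0 → m ≤ x := hm.2.2
  -- the set Lq = S ∩ [c-m, c)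
  set Lq : Set ℕ := {x | x ∈ S ∧ c - m ≤ x ∧ x < c} with hLq
  set M : Set ℕ := (fun j => j * m) '' (Set.Iio (q - 1)) with hM
  -- finiteness
  have hLfin : L.Finite := (Set.finite_Iio c).subset (by rw [hL]; intro x hx; exact hx.2)
  have hLqfin : Lq.Finite := (Set.finite_Iio c).subset (fun x hx => hx.2.2)
  have hMfin : M.Finite := ((Set.finite_Iio (q - 1)).image _)
  have hADIfin : (A ∩ D ∩ {x | c ≤ x ∧ x < c + m}).Finite :=
    (Set.finite_Iio (c + m)).subset (fun x hx => hx.2.2)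
  have hDqfin : Dq.Finite := (Set.finite_Iio (c + m)).subset
    (by rw [hDq]; intro x hx; exact hx.2.2)
  have hPLfin : (P ∩ L).Finite := hLfin.subset (Set.inter_subset_right)
  -- multiples of m are in S
  have hmul : ∀ j : ℕ, j * m ∈ S := by
    intro j
    induction j with
    | zero => simpa using h0
    | succ n ih => have := hadd _ ih _ hm.1; simpa [Nat.succ_mul] using this
  -- M ⊆ L and bounds
  have hMsub : ∀ x ∈ M, x ∈ S ∧ x < c - m := by
    rintro x ⟨j, hj, hjx⟩
    simp only [Set.mem_Iio] at hj
    simp only [] at hjx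
    subst hjx
    refine ⟨hmul j, ?_⟩
    have hjq : j * m ≤ (q - 2) * m := Nat.mul_le_mul_right m (by omega)
    have hsm : (q - 2) * m = q * m - 2 * m := Nat.sub_mul q 2 m
    have h2m : 2 * m ≤ q * m := Nat.mul_le_mul_right m (by omega)
    omega
  have hML : M ⊆ L := by
    intro x hx
    rw [hL]
    exact ⟨(hMsub x hx).1, by have := (hMsub x hx).2; omega⟩
  have hLqL : Lq ⊆ L := by
    intro x hx
    rw [hL]; exact ⟨hx.1, hx.2.2⟩
  have hdisjMLq : Disjoint M Lq := by
    rw [Set.disjoint_left]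
    intro x hx hx'
    have := (hMsub x hx).2
    have := hx'.2.1
    omega
  have hMcard : M.ncard = q - 1 := by
    rw [hM, Set.ncard_image_of_injective _ (fun a b h => Nat.eq_of_mul_eq_mul_right (by omega) h)]
    rw [← Finset.coe_range, Set.ncard_coe_finset, Finset.card_range]
  -- lower bound |L| ≥ (q-1) + |Lq|
  have hLlow : (q - 1) + Lq.ncard ≤ L.ncard := by
    rw [← hMcard, ← Set.ncard_union_eq hdisjMLq hMfin hLqfin]
    exact Set.ncard_le_ncard (Set.union_subset hML hLqL) hLfin
  -- decomposition of Dq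
  have hDqdecomp : Dq = ((fun y => m + y) '' Lq) ∪ (A ∩ D ∩ {x | c ≤ x ∧ x < c + m}) := by
    ext x
    constructor
    · intro hx
      rw [hDq] at hx
      obtain ⟨hxD, hxc, hxcm⟩ := hx
      have hxS : x ∈ S := by rw [hD] at hxD; exact hxD.1
      by_cases hxA : x ∈ A
      · exact Or.inr ⟨⟨hxA, hxD⟩, hxc, hxcm⟩
      · left
        rw [hA] at hxA
        simp only [Set.mem_setOf_eq, not_and, not_not] at hxA
        obtain ⟨s, hs, hxs⟩ := hxA hxS
        exact ⟨s, ⟨hs, by omega, by omega⟩, by show m + s = x; omega⟩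
    · intro hx
      rcases hx with ⟨y, hy, hyx⟩ | hx
      · simp only [] at hyx
        subst hyx
        rw [hDq]
        have hy0 : y ≠ 0 := by have := hy.2.1; omega
        refine ⟨?_, by have := hy.2.1; omega, by have := hy.2.2; omega⟩
        rw [hD]
        exact ⟨hadd m hm.1 y hy.1, m, hm.1, y, hy.1, hm.2.1, hy0, rfl⟩
      · rw [hDq]
        exact ⟨hx.1.2, hx.2⟩
  have hdisjDq : Disjoint ((fun y => m + y) '' Lq) (A ∩ D ∩ {x | c ≤ x ∧ x < c + m}) := by
    rw [Set.disjoint_left]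
    rintro x ⟨y, hy, rfl⟩ hx
    have hxA := hx.1.1
    rw [hA] at hxA
    exact hxA.2 ⟨y, hy.1, rfl⟩
  have hDqcard : Dq.ncard = Lq.ncard + αq'' := by
    rw [hDqdecomp, Set.ncard_union_eq hdisjDq (hLqfin.image _) hADIfin,
      Set.ncard_image_of_injective _ (fun a b h => by omega), hαq'']
  -- primitive decomposition lemma
  have prim : ∀ u, u ∈ S → u ≠ 0 → ∀ v, v ∈ S → v ≠ 0 →
      ∃ a ∈ P, ∃ b ∈ S, b ≠ 0 ∧ a + b = u + v := by
    intro u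
    induction u using Nat.strong_induction_on with
    | _ u ih =>
      intro hu hu0 v hv hv0
      by_cases hup : u ∈ P
      · exact ⟨u, hup, v, hv, hv0, rfl⟩
      · have hdec : ∃ a ∈ S, ∃ b ∈ S, a ≠ 0 ∧ b ≠ 0 ∧ a + b = u := by
          rw [hP] at hup
          simp only [Set.mem_setOf_eq, not_and, not_not] at hup
          exact hup hu hu0
        obtain ⟨a, ha, b, hb, ha0, hb0, hab⟩ := hdec
        have hbm := hge b hb hb0
        have hlt : a < u := by omega
        obtain ⟨a', ha', b', hb', hb'0, habs⟩ :=
          ih a hlt ha ha0 (b + v) (hadd b hb v hv) (by omega)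
        exact ⟨a', ha', b', hb', hb'0, by omega⟩
  -- key inequality
  have hpq : q ≤ (P ∩ L).ncard := le_trans (le_max_right _ _) hbig
  have hpa : αq'' ≤ (P ∩ L).ncard := le_trans (le_max_left _ _) hbig
  set p := (P ∩ L).ncard with hp
  set t := Lq.ncard with ht
  have key : q * Dq.ncard ≤ p * L.ncard := by
    rcases lt_or_ge αq'' q with hcase | hcase
    · -- α ≤ q - 1
      calc q * Dq.ncard = q * t + q * αq'' := by rw [hDqcard]; ring
        _ ≤ p * t + p * (q - 1) := by
            have h1 : q * t ≤ p * t := Nat.mul_le_mul_right t hpq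
            have h2 : q * αq'' ≤ q * (q - 1) := Nat.mul_le_mul_left q (by omega)
            have h3 : q * (q - 1) ≤ p * (q - 1) := Nat.mul_le_mul_right _ hpq
            omega
        _ = p * ((q - 1) + t) := by ring
        _ ≤ p * L.ncard := Nat.mul_le_mul_left p hLlow
    · -- α ≥ q > 0
      have hne : (A ∩ D ∩ {x | c ≤ x ∧ x < c + m}).Nonempty := by
        apply Set.nonempty_of_ncard_ne_zero
        omega
      obtain ⟨x, hxADI⟩ := hne
      have hxA := hxADI.1.1
      have hxD := hxADI.1.2
      have hxI : c ≤ x ∧ x < c + m := hxADI.2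
      -- decompose x = a + b with a primitive
      obtain ⟨u, hu, v, hv, hu0, hv0, huv⟩ := by rw [hD] at hxD; exact hxD.2
      obtain ⟨a, haP, b, hbS, hb0, habx⟩ := prim u hu hu0 v hv hv0
      have habx' : a + b = x := by omega
      have haS : a ∈ S := by rw [hP] at haP; exact haP.1
      have ha0 : a ≠ 0 := by rw [hP] at haP; exact haP.2.1
      have ham := hge a haS ha0
      have hbm := hge b hbS hb0
      have hal : a < c := by omega
      have hbl : b < c := by omega
      have hxAprop : ¬ ∃ s ∈ S, x = m + s := by rw [hA] at hxA; exact hxA.2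
      have hanm : a ≠ m := by
        intro h; exact hxAprop ⟨b, hbS, by omega⟩
      have haA : a ∈ A := by
        rw [hA]
        refine ⟨haS, ?_⟩
        rintro ⟨s, hs, has⟩
        rcases Nat.eq_zero_or_pos s with hs0 | hs0
        · exact hanm (by omega)
        · rw [hP] at haP
          exact haP.2.2 ⟨m, hm.1, s, hs, hm.2.1, by omega, by omega⟩
      have hbA : b ∈ A := by
        rw [hA]
        refine ⟨hbS, ?_⟩
        rintro ⟨s, hs, hbs⟩
        exact hxAprop ⟨a + s, hadd a haS s hs, by omega⟩
      by_cases hsub : ∀ w ∈ A, w < c → w ≠ 0 → w ∈ Lq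
      · -- contradiction: a, b ∈ [c-m, c) but a + b < c + m, c > 3m
        exfalso
        have haLq : a ∈ Lq := hsub a haA hal ha0
        have hbLq : b ∈ Lq := hsub b hbA hbl hb0
        have h1 := haLq.2.1
        have h2 := hbLq.2.1
        omega
      · -- extra element w of L: |L| ≥ q + t
        push_neg at hsub
        obtain ⟨w, hwA, hwc, hw0, hwLq⟩ := hsub
        have hwS : w ∈ S := by rw [hA] at hwA; exact hwA.1
        have hwL : w ∈ L := by rw [hL]; exact ⟨hwS, hwc⟩
        have hwM : w ∉ M := by
          rintro ⟨j, hj, hjw⟩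
          simp only [] at hjw
          rcases Nat.eq_zero_or_pos j with hj0 | hj0
          · rw [hj0, Nat.zero_mul] at hjw
            exact hw0 hjw.symm
          · rw [hA] at hwA
            refine hwA.2 ⟨(j - 1) * m, hmul (j - 1), ?_⟩
            have h1 : (j - 1) * m = j * m - 1 * m := Nat.sub_mul j 1 m
            have h2 : 1 * m = m := Nat.one_mul m
            have hjm : m ≤ j * m := Nat.le_mul_of_pos_left m hj0
            omega
        have hLlow2 : q + t ≤ L.ncard := by
          have hins : (insert w (M ∪ Lq)).ncard = 1 + ((q - 1) + t) := by
            rw [Set.ncard_insert_of_notMem (by simp [hwM, hwLq]) ((hMfin.union hLqfin))]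
            rw [Set.ncard_union_eq hdisjMLq hMfin hLqfin, hMcard]
            omega
          have hsubL : insert w (M ∪ Lq) ⊆ L := by
            intro z hz
            rcases hz with rfl | hz
            · exact hwL
            · exact (Set.union_subset hML hLqL) hz
          have := Set.ncard_le_ncard hsubL hLfin
          omega
        calc q * Dq.ncard = q * t + q * αq'' := by rw [hDqcard]; ring
          _ ≤ p * t + p * q := by
              have h1 : q * t ≤ p * t := Nat.mul_le_mul_right t hpq
              have h2 : q * αq'' ≤ q * p := Nat.mul_le_mul_left q hpa
              have h3 : q * p = p * q := Nat.mul_comm q p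
              omega
          _ = p * (q + t) := by ring
          _ ≤ p * L.ncard := Nat.mul_le_mul_left p hLlow2
  -- conclude
  have keyZ : (q : ℤ) * Dq.ncard ≤ (p : ℤ) * L.ncard := by exact_mod_cast key
  constructor
  · linarith
  · have : (0 : ℤ) ≤ (ρ : ℤ) := Int.ofNat_nonneg ρ
    linarith
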